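/- Let S and A be finite nonempty types, K ∈ ℕ, ν > 0 a real number, γ ∈ ℝ, and d ∈ ℕ. For each agent k ∈ {1,…,K}, let Q^k : S × A → ℝ (the k-th expert's action-value function), T^k : S × A → S × A (the successor map along agent k's demonstrated transitions), Ψ^k : S × A → ℝ^d (successor features) and w^k ∈ ℝ^d (preferences). Let Φ : S × A → ℝ^d be shared cumulants. Suppose for every k, s, a: (i) exp(⟨Ψ^k(s,a), w^k⟩) / ∑_{b∈A} exp(⟨Ψ^k(s,b), w^k⟩) = exp(Q^k(s,a)/ν) / ∑_{b∈A} exp(Q^k(s,b)/ν), and (ii) Ψ^k(s,a) − γ·Ψ^k(T^k(s,a)) = Φ(s,a). Define r^k(s,a) := Q^k(s,a) − γ·Q^k(T^k(s,a)). Then for each k there exists a function F^k : S → ℝ such that for all (s,a) ∈ S × A, ⟨Φ(s,a), w^k⟩ = (1/ν)·r^k(s,a) + F^k(s) − γ·F^k(fst(T^k(s,a))), where fst denotes the state component. In particular, the dot product of the learned cumulants with the k-th preference vector is a scaled, potential-based shaping of the k-th expert's reward. -/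

import Mathlib

/-- Multi-task validity of the ITD minimiser: if for each agent `k` the successor
features `Ψ k` and preferences `w k` reproduce the agent's Boltzmann policy
(`⟨Ψ^k, w^k⟩` minimises the behavioural-cloning loss) and the shared cumulants `Φ`
are TD-consistent with `Ψ k` along the demonstrated transitions, then
`⟨Φ(s,a), w^k⟩` is a scaled, potential-based shaping of the `k`-th expert's reward. -/
theorem itd_multi_task {S A : Type*} [Fintype S] [Nonempty S] [Fintype A] [Nonempty A]
    (K : ℕ) (ν : ℝ) (hν : 0 < ν) (γ : ℝ) (d : ℕ)
    (Q : Fin K → S × A → ℝ) (T : Fin K → S × A → S × A)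
    (Ψ : Fin K → S × A → EuclideanSpace ℝ (Fin d))
    (w : Fin K → EuclideanSpace ℝ (Fin d))
    (Φ : S × A → EuclideanSpace ℝ (Fin d))
    (h1 : ∀ k : Fin K, ∀ s : S, ∀ a : A,
      Real.exp ((inner ℝ (Ψ k (s, a)) (w k) : ℝ))
          / ∑ b : A, Real.exp ((inner ℝ (Ψ k (s, b)) (w k) : ℝ))
        = Real.exp (Q k (s, a) / ν) / ∑ b : A, Real.exp (Q k (s, b) / ν))
    (h2 : ∀ k : Fin K, ∀ s : S, ∀ a : A,
      Ψ k (s, a) - γ • Ψ k (T k (s, a)) = Φ (s, a)) :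
    ∀ k : Fin K, ∃ F : S → ℝ, ∀ s : S, ∀ a : A,
      (inner ℝ (Φ (s, a)) (w k) : ℝ)
        = (1 / ν) * (Q k (s, a) - γ * Q k (T k (s, a)))
          + F s - γ * F (T k (s, a)).1 := by
  intro k
  set F : S → ℝ := fun s =>
    Real.log (∑ b : A, Real.exp ((inner ℝ (Ψ k (s, b)) (w k) : ℝ)))
      - Real.log (∑ b : A, Real.exp (Q k (s, b) / ν)) with hF
  have key : ∀ s : S, ∀ a : A,
      (inner ℝ (Ψ k (s, a)) (w k) : ℝ) = Q k (s, a) / ν + F s := by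
    intro s a
    have hZ1 : 0 < ∑ b : A, Real.exp ((inner ℝ (Ψ k (s, b)) (w k) : ℝ)) :=
      Finset.sum_pos (fun b _ => Real.exp_pos _) Finset.univ_nonempty
    have hZ2 : 0 < ∑ b : A, Real.exp (Q k (s, b) / ν) :=
      Finset.sum_pos (fun b _ => Real.exp_pos _) Finset.univ_nonempty
    have h := h1 k s a
    rw [div_eq_div_iff hZ1.ne' hZ2.ne'] at h
    have hlog := congrArg Real.log h
    rw [Real.log_mul (Real.exp_pos _).ne' hZ2.ne',
      Real.log_mul (Real.exp_pos _).ne' hZ1.ne', Real.log_exp, Real.log_exp] at hlog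
    simp only [hF]
    linarith
  refine ⟨F, fun s a => ?_⟩
  have hΦ : (inner ℝ (Φ (s, a)) (w k) : ℝ)
      = (inner ℝ (Ψ k (s, a)) (w k) : ℝ) - γ * (inner ℝ (Ψ k (T k (s, a))) (w k) : ℝ) := by
    rw [← h2 k s a, inner_sub_left, real_inner_smul_left]
  have hT : Ψ k (T k (s, a)) = Ψ k ((T k (s, a)).1, (T k (s, a)).2) := by
    rw [Prod.mk.eta]
  rw [hΦ, key s a, hT, key (T k (s, a)).1 (T k (s, a)).2, Prod.mk.eta]
  field_simp
  ring
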